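/- Let A be a K×K positive semidefinite Hermitian matrix with eigen-decomposition A = VΛVᴴ, eigenvalues in nonincreasing order, and suppose λ_M > 0. Let Ṽ_M denote the first M columns of V. Then F = sqrt(p0/M) · Ṽ_M · Ψ, for any M×M unitary Ψ, satisfies tr(FᴴF) = p0 and det(FᴴAF) = (p0/M)^M ∏_{i=1}^M λ_i, i.e., it achieves the upper bound (p0/M)^M ∏_{i=1}^M λ_i over all F with tr(FᴴF) ≤ p0. -/

import Mathlib

open Matrix

/-- The precoder `F = √(p0/M) Ṽ_M Ψ` achieves the bound
`det(FᴴAF) = (p0/M)^M ∏_{i=1}^M λ_i` with full power `tr(FᴴF) = p0`. -/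
theorem stmt8 (K M : ℕ) (hM : 0 < M) (hMK : M ≤ K) (p0 : ℝ) (hp0 : 0 < p0)
    (V : Matrix (Fin K) (Fin K) ℂ) (hV : Vᴴ * V = 1)
    (lam : Fin K → ℝ) (hmono : ∀ i j : Fin K, i ≤ j → lam j ≤ lam i)
    (hnn : ∀ i, 0 ≤ lam i)
    (hpos : 0 < lam (Fin.castLE hMK ⟨M - 1, Nat.sub_lt hM Nat.one_pos⟩))
    (A : Matrix (Fin K) (Fin K) ℂ)
    (hA : A = V * Matrix.diagonal (fun i => (lam i : ℂ)) * Vᴴ)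
    (Ψ : Matrix (Fin M) (Fin M) ℂ) (hΨ : Ψᴴ * Ψ = 1)
    (F : Matrix (Fin K) (Fin M) ℂ)
    (hF : F = Real.sqrt (p0 / M) • (V.submatrix id (Fin.castLE hMK) * Ψ)) :
    (Fᴴ * F).trace = (p0 : ℂ) ∧
    (Fᴴ * A * F).det =
      ((((p0 / M) ^ M * ∏ i : Fin M, lam (Fin.castLE hMK i) : ℝ)) : ℂ) := by
  set e : Fin M → Fin K := Fin.castLE hMK with he
  have hinj : Function.Injective e := Fin.castLE_injective hMK
  set Vt : Matrix (Fin K) (Fin M) ℂ := V.submatrix id e with hVt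
  have hsub : ∀ B : Matrix (Fin K) (Fin K) ℂ,
      Vtᴴ * B * Vt = (Vᴴ * B * V).submatrix e e := by
    intro B
    rw [Matrix.submatrix_mul (Vᴴ * B) V e id e Function.bijective_id,
      Matrix.submatrix_mul Vᴴ B e id id Function.bijective_id]
    simp [hVt, Matrix.conjTranspose_submatrix, Matrix.mul_assoc]
  have h1 : Vtᴴ * Vt = 1 := by
    have := hsub 1
    simp only [Matrix.mul_one] at this
    rw [this, hV]
    ext i j
    simp [Matrix.one_apply, hinj.eq_iff]
  have h2 : Vtᴴ * A * Vt = Matrix.diagonal (fun i => (lam (e i) : ℂ)) := by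
    rw [hsub, hA]
    have : Vᴴ * (V * Matrix.diagonal (fun i => (lam i : ℂ)) * Vᴴ) * V
        = Matrix.diagonal (fun i => (lam i : ℂ)) := by
      rw [show Vᴴ * (V * Matrix.diagonal (fun i => (lam i : ℂ)) * Vᴴ) * V
          = (Vᴴ * V) * Matrix.diagonal (fun i => (lam i : ℂ)) * (Vᴴ * V) by
        simp [Matrix.mul_assoc], hV, Matrix.one_mul, Matrix.mul_one]
    rw [this]
    ext i j
    by_cases h : i = j <;> simp [Matrix.diagonal_apply, h, hinj.eq_iff]
  -- rewrite F with complex scalar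
  set c : ℂ := ((p0 / M : ℝ) : ℂ) with hc
  have hr : ((Real.sqrt (p0 / M) : ℝ) : ℂ) * ((Real.sqrt (p0 / M) : ℝ) : ℂ) = c := by
    rw [hc, ← Complex.ofReal_mul, Real.mul_self_sqrt (by positivity)]
  have hFc : F = ((Real.sqrt (p0 / M) : ℝ) : ℂ) • (Vt * Ψ) := by
    rw [hF]
    ext i j
    simp [Complex.real_smul, hVt]
  have hFH : Fᴴ = ((Real.sqrt (p0 / M) : ℝ) : ℂ) • (Ψᴴ * Vtᴴ) := by
    rw [hFc, Matrix.conjTranspose_smul, Matrix.conjTranspose_mul]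
    simp
  have key : ∀ B : Matrix (Fin K) (Fin K) ℂ,
      Fᴴ * B * F = c • (Ψᴴ * (Vtᴴ * B * Vt) * Ψ) := by
    intro B
    rw [hFH, hFc, Matrix.smul_mul, Matrix.smul_mul, Matrix.mul_smul, smul_smul, hr]
    congr 1
    simp [Matrix.mul_assoc]
  have hFF : Fᴴ * F = c • (1 : Matrix (Fin M) (Fin M) ℂ) := by
    have := key 1
    simp only [Matrix.mul_one] at this
    rw [this, h1, Matrix.mul_one, hΨ]
  constructor
  · rw [hFF]
    simp only [Matrix.trace_smul, Matrix.trace_one, Fintype.card_fin, smul_eq_mul]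
    rw [hc]
    have hM' : (M : ℂ) ≠ 0 := Nat.cast_ne_zero.mpr hM.ne'
    push_cast
    field_simp
  · rw [key A, h2]
    rw [Matrix.det_smul]
    have hdet : (Ψᴴ * Matrix.diagonal (fun i => (lam (e i) : ℂ)) * Ψ).det
        = ∏ i : Fin M, (lam (e i) : ℂ) := by
      rw [Matrix.det_mul, Matrix.det_mul, Matrix.det_diagonal]
      have : Ψᴴ.det * Ψ.det = 1 := by rw [← Matrix.det_mul, hΨ, Matrix.det_one]
      ring_nf
      rw [mul_comm Ψᴴ.det, mul_assoc, this, mul_one]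
    rw [hdet, hc, Fintype.card_fin]
    push_cast
    ring
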